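/- For all x, y ∈ (0,1), x·log(x/y) + (1−x)·log((1−x)/(1−y)) ≥ ((x−y)²/(2y−1))·log(y/(1−y)), where for y = 1/2 the right-hand side is interpreted as its limit 2(x−y)². -/

import Mathlib

open Real Set

noncomputable def entG (y c t : ℝ) : ℝ :=
  t * Real.log t - t * Real.log y + (1 - t) * Real.log (1 - t)
    - (1 - t) * Real.log (1 - y) - c * (t - y) ^ 2

noncomputable def entH (y c t : ℝ) : ℝ :=
  Real.log t - Real.log (1 - t) - (Real.log y - Real.log (1 - y)) - 2 * c * (t - y)

lemma hasDerivAt_entG (y c p : ℝ) (hp0 : 0 < p) (hp1 : p < 1) :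
    HasDerivAt (entG y c) (entH y c p) p := by
  have h1 : HasDerivAt (fun t : ℝ => t * Real.log t) (Real.log p + 1) p :=
    Real.hasDerivAt_mul_log hp0.ne'
  have hu : HasDerivAt (fun t : ℝ => 1 - t) (-1) p := by
    simpa using (hasDerivAt_id p).const_sub 1
  have h2 : HasDerivAt (fun t : ℝ => (1 - t) * Real.log (1 - t))
      ((Real.log (1 - p) + 1) * (-1)) p := by
    have := (Real.hasDerivAt_mul_log (x := 1 - p) (by linarith)).comp p hu
    exact this
  have h3 : HasDerivAt (fun t : ℝ => t * Real.log y) (Real.log y) p := by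
    simpa using (hasDerivAt_id p).mul_const (Real.log y)
  have h4 : HasDerivAt (fun t : ℝ => (1 - t) * Real.log (1 - y)) (-Real.log (1 - y)) p := by
    simpa using hu.mul_const (Real.log (1 - y))
  have h5 : HasDerivAt (fun t : ℝ => c * (t - y) ^ 2) (c * (2 * (p - y))) p := by
    have h6 : HasDerivAt (fun t : ℝ => (t - y) ^ 2) (2 * (p - y) ^ 1 * 1) p :=
      ((hasDerivAt_id p).sub_const y).pow 2
    simpa using h6.const_mul c
  have := ((((h1.sub h3).add h2).sub h4).sub h5)
  refine this.congr_deriv ?_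
  unfold entH; ring

lemma hasDerivAt_entH (y c p : ℝ) (hp0 : 0 < p) (hp1 : p < 1) :
    HasDerivAt (entH y c) (1 / p + 1 / (1 - p) - 2 * c) p := by
  have h1 : HasDerivAt Real.log p⁻¹ p := Real.hasDerivAt_log hp0.ne'
  have hu : HasDerivAt (fun t : ℝ => 1 - t) (-1) p := by
    simpa using (hasDerivAt_id p).const_sub 1
  have h2 : HasDerivAt (fun t : ℝ => Real.log (1 - t)) ((1 - p)⁻¹ * (-1)) p :=
    (Real.hasDerivAt_log (by linarith : (1:ℝ) - p ≠ 0)).comp p hu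
  have h3 : HasDerivAt (fun t : ℝ => 2 * c * (t - y)) (2 * c) p := by
    simpa using ((hasDerivAt_id p).sub_const y).const_mul (2 * c)
  have := ((h1.sub h2).sub_const (Real.log y - Real.log (1 - y))).sub h3
  refine this.congr_deriv ?_
  ring

lemma mono_aux {f f' : ℝ → ℝ} {a b : ℝ} (hab : a ≤ b) (ha : 0 < a) (hb : b < 1)
    (hd : ∀ p, 0 < p → p < 1 → HasDerivAt f (f' p) p)
    (hpos : ∀ t, a < t → t < b → 0 ≤ f' t) : f a ≤ f b := by
  have hmono : MonotoneOn f (Icc a b) := by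
    apply monotoneOn_of_deriv_nonneg (convex_Icc a b)
    · intro p hp
      exact (hd p (lt_of_lt_of_le ha hp.1) (lt_of_le_of_lt hp.2 hb)).continuousAt.continuousWithinAt
    · intro p hp
      rw [interior_Icc] at hp
      exact (hd p (lt_of_lt_of_le ha hp.1.le) (lt_of_le_of_lt hp.2.le hb)).differentiableAt.differentiableWithinAt
    · intro p hp
      rw [interior_Icc] at hp
      rw [(hd p (lt_of_lt_of_le ha hp.1.le) (lt_of_le_of_lt hp.2.le hb)).deriv]
      exact hpos p hp.1 hp.2
  exact hmono (left_mem_Icc.2 hab) (right_mem_Icc.2 hab) hab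

lemma anti_aux {f f' : ℝ → ℝ} {a b : ℝ} (hab : a ≤ b) (ha : 0 < a) (hb : b < 1)
    (hd : ∀ p, 0 < p → p < 1 → HasDerivAt f (f' p) p)
    (hneg : ∀ t, a < t → t < b → f' t ≤ 0) : f b ≤ f a := by
  have := mono_aux (f := fun t => -f t) (f' := fun t => -f' t) hab ha hb
    (fun p hp0 hp1 => (hd p hp0 hp1).neg) (fun t h1 h2 => by simpa using hneg t h1 h2)
  have h2 : -f a ≤ -f b := this
  linarith

/-- `1/s + 1/(1-s) = 1/(s(1-s))`. -/
lemma inv_sum_eq {s : ℝ} (h0 : 0 < s) (h1 : s < 1) :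
    1 / s + 1 / (1 - s) = 1 / (s * (1 - s)) := by
  have h2 : s ≠ 0 := h0.ne'
  have h3 : (1 : ℝ) - s ≠ 0 := by linarith
  field_simp
  ring

lemma deriv_anti_left {s t : ℝ} (hs : 0 < s) (hst : s ≤ t) (ht : t ≤ 1/2) :
    1 / t + 1 / (1 - t) ≤ 1 / s + 1 / (1 - s) := by
  have ht0 : 0 < t := lt_of_lt_of_le hs hst
  have ht1 : t < 1 := by linarith
  have hs1 : s < 1 := by linarith
  rw [inv_sum_eq hs hs1, inv_sum_eq ht0 ht1]
  have key : s * (1 - s) ≤ t * (1 - t) := by nlinarith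
  have hpos : 0 < s * (1 - s) := by nlinarith
  exact one_div_le_one_div_of_le hpos key

lemma deriv_mono_right {s t : ℝ} (hs : 1/2 ≤ s) (hst : s ≤ t) (ht : t < 1) :
    1 / s + 1 / (1 - s) ≤ 1 / t + 1 / (1 - t) := by
  have hs0 : 0 < s := by linarith
  have hs1 : s < 1 := by linarith
  have ht0 : 0 < t := by linarith
  rw [inv_sum_eq hs0 hs1, inv_sum_eq ht0 ht]
  have key : t * (1 - t) ≤ s * (1 - s) := by nlinarith
  have hpos : 0 < t * (1 - t) := by nlinarith
  exact one_div_le_one_div_of_le hpos key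

lemma entH_y (y c : ℝ) : entH y c y = 0 := by unfold entH; ring

lemma entG_y (y c : ℝ) : entG y c y = 0 := by unfold entG; ring

/-- Core inequality for `y ≤ 1/2`. -/
lemma main_half (x y c : ℝ) (hx0 : 0 < x) (hx1 : x < 1) (hy0 : 0 < y) (hy1 : y < 1)
    (hyh : y ≤ 1/2)
    (hc : c * (2 * y - 1) = Real.log y - Real.log (1 - y))
    (hc2 : y = 1/2 → c = 2) :
    c * (x - y) ^ 2 ≤ x * Real.log (x / y) + (1 - x) * Real.log ((1 - x) / (1 - y)) := by
  have hlog1 : Real.log (x / y) = Real.log x - Real.log y :=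
    Real.log_div hx0.ne' hy0.ne'
  have hlog2 : Real.log ((1 - x) / (1 - y)) = Real.log (1 - x) - Real.log (1 - y) :=
    Real.log_div (by linarith) (by linarith)
  rw [hlog1, hlog2]
  have key : 0 ≤ entG y c x := by
    rcases eq_or_lt_of_le hyh with hyeq | hylt
    · -- y = 1/2
      have hceq : c = 2 := hc2 hyeq
      subst hceq
      -- entH ≤ 0 on (0, 1/2), ≥ 0 on (1/2, 1)
      have hHmono : ∀ t : ℝ, 0 < t → t < 1 → 0 ≤ 1 / t + 1 / (1 - t) - 2 * 2 := by
        intro t h0 h1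
        rw [inv_sum_eq h0 h1]
        have hpos : 0 < t * (1 - t) := by nlinarith
        rw [sub_nonneg, le_div_iff₀ hpos]
        nlinarith [sq_nonneg (1 - 2 * t)]
      have hH0 : entH y 2 y = 0 := entH_y y 2
      rcases lt_trichotomy x y with hxy | hxy | hxy
      · -- x < y = 1/2 : entH ≤ 0 on (x, y), entG antitone
        have := anti_aux (f := entG y 2) (f' := entH y 2) hxy.le hx0 hy1
          (fun p hp0 hp1 => hasDerivAt_entG y 2 p hp0 hp1)
          (fun t h1 h2 => by
            have ht0 : 0 < t := lt_trans hx0 h1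
            have ht1 : t < 1 := lt_trans h2 hy1
            -- entH t ≤ entH y = 0 since entH monotone
            have := mono_aux (f := entH y 2) (f' := fun p => 1 / p + 1 / (1 - p) - 2 * 2)
              h2.le ht0 hy1 (fun p hp0 hp1 => hasDerivAt_entH y 2 p hp0 hp1)
              (fun s hs1 hs2 => hHmono s (lt_trans ht0 hs1) (lt_trans hs2 hy1))
            rw [hH0] at this
            exact this)
        rw [entG_y] at this
        linarith
      · rw [hxy, entG_y]
      · -- x > y = 1/2 : entH ≥ 0 on (y, x), entG monotone
        have := mono_aux (f := entG y 2) (f' := entH y 2) hxy.le hy0 hx1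
          (fun p hp0 hp1 => hasDerivAt_entG y 2 p hp0 hp1)
          (fun t h1 h2 => by
            have ht0 : 0 < t := lt_trans hy0 h1
            have ht1 : t < 1 := lt_trans h2 hx1
            have := mono_aux (f := entH y 2) (f' := fun p => 1 / p + 1 / (1 - p) - 2 * 2)
              h1.le hy0 ht1 (fun p hp0 hp1 => hasDerivAt_entH y 2 p hp0 hp1)
              (fun s hs1 hs2 => hHmono s (lt_trans hy0 hs1) (lt_trans hs2 ht1))
            rw [hH0] at this
            exact this)
        rw [entG_y] at this
        linarith
    · -- y < 1/2
      have hhalf1 : (1 : ℝ) / 2 < 1 := by norm_num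
      have hy1' : y < 1 - y := by linarith
      -- zeros of entH
      have hH0 : entH y c y = 0 := entH_y y c
      have hHhalf : entH y c (1/2) = 0 := by
        unfold entH
        have : Real.log (1 - 1/2 : ℝ) = Real.log (1/2 : ℝ) := by norm_num
        rw [this]
        linarith [hc]
      have hH1y : entH y c (1 - y) = 0 := by
        unfold entH
        have : (1 : ℝ) - (1 - y) = y := by ring
        rw [this]
        linarith [hc]
      -- zeros of entG
      have hG0 : entG y c y = 0 := entG_y y c
      have hG1y : entG y c (1 - y) = 0 := by
        unfold entG
        have : (1 : ℝ) - (1 - y) = y := by ring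
        rw [this]
        nlinarith [hc]
      -- continuity of entH on relevant intervals
      have hHcont : ∀ a b : ℝ, 0 < a → b < 1 → ContinuousOn (entH y c) (Icc a b) := by
        intro a b ha hb p hp
        exact (hasDerivAt_entH y c p (lt_of_lt_of_le ha hp.1)
          (lt_of_le_of_lt hp.2 hb)).continuousAt.continuousWithinAt
      -- Rolle on [y, 1/2]
      obtain ⟨ξ, hξmem, hξ⟩ := exists_deriv_eq_zero hylt (hHcont y (1/2) hy0 hhalf1)
        (by rw [hH0, hHhalf])
      have hξ0 : 0 < ξ := lt_trans hy0 hξmem.1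
      have hξ1 : ξ < 1 := lt_trans hξmem.2 hhalf1
      rw [(hasDerivAt_entH y c ξ hξ0 hξ1).deriv] at hξ
      -- Rolle on [1/2, 1-y]
      obtain ⟨η, hηmem, hη⟩ := exists_deriv_eq_zero (by linarith : (1:ℝ)/2 < 1 - y)
        (hHcont (1/2) (1 - y) (by norm_num) (by linarith)) (by rw [hHhalf, hH1y])
      have hη0 : 0 < η := lt_trans (by norm_num) hηmem.1
      have hη1 : η < 1 := by linarith [hηmem.2]
      rw [(hasDerivAt_entH y c η hη0 hη1).deriv] at hη
      -- sign of entH' : ≥ 0 on (0, ξ], ≤ 0 on [ξ, 1/2] ∪ [1/2, η] i.e. [ξ, η], ≥ 0 on [η, 1)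
      have hA : ∀ t, 0 < t → t ≤ ξ → 0 ≤ 1 / t + 1 / (1 - t) - 2 * c := by
        intro t h0 h1
        have := deriv_anti_left h0 h1 hξmem.2.le
        linarith
      have hB : ∀ t, ξ ≤ t → t ≤ 1/2 → 1 / t + 1 / (1 - t) - 2 * c ≤ 0 := by
        intro t h0 h1
        have := deriv_anti_left hξ0 h0 h1
        linarith
      have hB' : ∀ t, 1/2 ≤ t → t ≤ η → 1 / t + 1 / (1 - t) - 2 * c ≤ 0 := by
        intro t h0 h1
        have := deriv_mono_right h0 h1 hη1
        linarith
      have hC : ∀ t, η ≤ t → t < 1 → 0 ≤ 1 / t + 1 / (1 - t) - 2 * c := by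
        intro t h0 h1
        have := deriv_mono_right hηmem.1.le h0 h1
        linarith
      -- sign of entH
      have hHle_left : ∀ p, 0 < p → p < y → entH y c p ≤ 0 := by
        intro p h0 h1
        have := mono_aux (f := entH y c) (f' := fun t => 1 / t + 1 / (1 - t) - 2 * c)
          h1.le h0 hy1 (fun q hq0 hq1 => hasDerivAt_entH y c q hq0 hq1)
          (fun s hs1 hs2 => hA s (lt_trans h0 hs1) (le_trans hs2.le hξmem.1.le))
        rw [hH0] at this; exact this
      have hHge_mid : ∀ p, y < p → p ≤ 1/2 → 0 ≤ entH y c p := by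
        intro p h1 h2
        rcases le_total p ξ with hpξ | hpξ
        · have := mono_aux (f := entH y c) (f' := fun t => 1 / t + 1 / (1 - t) - 2 * c)
            h1.le hy0 (by linarith) (fun q hq0 hq1 => hasDerivAt_entH y c q hq0 hq1)
            (fun s hs1 hs2 => hA s (lt_trans hy0 hs1) (le_trans hs2.le hpξ))
          rw [hH0] at this; exact this
        · have := anti_aux (f := entH y c) (f' := fun t => 1 / t + 1 / (1 - t) - 2 * c)
            h2 (by linarith) hhalf1 (fun q hq0 hq1 => hasDerivAt_entH y c q hq0 hq1)
            (fun s hs1 hs2 => hB s (le_trans hpξ hs1.le) hs2.le)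
          rw [hHhalf] at this; exact this
      have hHle_mid2 : ∀ p, 1/2 ≤ p → p < 1 - y → entH y c p ≤ 0 := by
        intro p h1 h2
        rcases le_total p η with hpη | hpη
        · have := anti_aux (f := entH y c) (f' := fun t => 1 / t + 1 / (1 - t) - 2 * c)
            h1 (by norm_num) (by linarith) (fun q hq0 hq1 => hasDerivAt_entH y c q hq0 hq1)
            (fun s hs1 hs2 => hB' s hs1.le (le_trans hs2.le hpη))
          rw [hHhalf] at this; exact this
        · have := mono_aux (f := entH y c) (f' := fun t => 1 / t + 1 / (1 - t) - 2 * c)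
            h2.le (by linarith) (by linarith) (fun q hq0 hq1 => hasDerivAt_entH y c q hq0 hq1)
            (fun s hs1 hs2 => hC s (le_trans hpη hs1.le) (by linarith))
          rw [hH1y] at this; exact this
      have hHge_right : ∀ p, 1 - y < p → p < 1 → 0 ≤ entH y c p := by
        intro p h1 h2
        have := mono_aux (f := entH y c) (f' := fun t => 1 / t + 1 / (1 - t) - 2 * c)
          h1.le (by linarith) h2 (fun q hq0 hq1 => hasDerivAt_entH y c q hq0 hq1)
          (fun s hs1 hs2 => hC s (le_trans hηmem.2.le hs1.le) (lt_trans hs2 h2))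
        rw [hH1y] at this; exact this
      -- final case analysis on x
      rcases lt_trichotomy x y with hxy | hxy | hxy
      · have := anti_aux (f := entG y c) (f' := entH y c) hxy.le hx0 hy1
          (fun p hp0 hp1 => hasDerivAt_entG y c p hp0 hp1)
          (fun t h1 h2 => hHle_left t (lt_trans hx0 h1) h2)
        rw [hG0] at this; linarith
      · rw [hxy, hG0]
      · rcases le_total x (1/2) with hx2 | hx2
        · have := mono_aux (f := entG y c) (f' := entH y c) hxy.le hy0 hx1
            (fun p hp0 hp1 => hasDerivAt_entG y c p hp0 hp1)
            (fun t h1 h2 => hHge_mid t h1 (le_trans h2.le hx2))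
          rw [hG0] at this; linarith
        · rcases lt_trichotomy x (1 - y) with hx3 | hx3 | hx3
          · have := anti_aux (f := entG y c) (f' := entH y c) hx3.le hx0 (by linarith)
              (fun p hp0 hp1 => hasDerivAt_entG y c p hp0 hp1)
              (fun t h1 h2 => hHle_mid2 t (le_trans hx2 h1.le) h2)
            rw [hG1y] at this; linarith
          · rw [hx3, hG1y]
          · have := mono_aux (f := entG y c) (f' := entH y c) hx3.le (by linarith) hx1
              (fun p hp0 hp1 => hasDerivAt_entG y c p hp0 hp1)
              (fun t h1 h2 => hHge_right t h1 (lt_trans h2 hx1))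
            rw [hG1y] at this; linarith
  unfold entG at key
  linarith

lemma main_all (x y c : ℝ) (hx0 : 0 < x) (hx1 : x < 1) (hy0 : 0 < y) (hy1 : y < 1)
    (hc : c * (2 * y - 1) = Real.log y - Real.log (1 - y))
    (hc2 : y = 1/2 → c = 2) :
    c * (x - y) ^ 2 ≤ x * Real.log (x / y) + (1 - x) * Real.log ((1 - x) / (1 - y)) := by
  rcases le_total y (1/2) with hyh | hyh
  · exact main_half x y c hx0 hx1 hy0 hy1 hyh hc hc2
  · have hyh' : 1 - y ≤ 1/2 := by linarith
    have h := main_half (1 - x) (1 - y) c (by linarith) (by linarith) (by linarith)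
      (by linarith) hyh'
      (by have : (1:ℝ) - (1 - y) = y := by ring
          rw [this]; linarith)
      (by intro h; apply hc2; linarith)
    have e1 : (1 : ℝ) - (1 - x) = x := by ring
    have e2 : (1 : ℝ) - (1 - y) = y := by ring
    rw [e1, e2] at h
    have e3 : ((1 - x) - (1 - y)) ^ 2 = (x - y) ^ 2 := by ring
    rw [e3] at h
    linarith

/-- Quantitative lower bound on the binary relative entropy: for `x, y ∈ (0,1)`,
`x log(x/y) + (1-x) log((1-x)/(1-y)) ≥ ((x-y)²/(2y-1)) log(y/(1-y))`,
the right-hand side being interpreted as `2(x-y)²` when `y = 1/2`. -/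
theorem relative_entropy_lower_bound
    (x y : ℝ) (hx : x ∈ Ioo (0 : ℝ) 1) (hy : y ∈ Ioo (0 : ℝ) 1) :
    (y ≠ 1/2 →
      (x - y) ^ 2 / (2 * y - 1) * Real.log (y / (1 - y)) ≤
        x * Real.log (x / y) + (1 - x) * Real.log ((1 - x) / (1 - y))) ∧
    (y = 1/2 →
      2 * (x - y) ^ 2 ≤
        x * Real.log (x / y) + (1 - x) * Real.log ((1 - x) / (1 - y))) := by
  obtain ⟨hx0, hx1⟩ := hx
  obtain ⟨hy0, hy1⟩ := hy
  constructor
  · intro hy2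
    have hd : 2 * y - 1 ≠ 0 := by
      intro h; apply hy2; linarith
    set c : ℝ := Real.log (y / (1 - y)) / (2 * y - 1) with hcdef
    have hlog : Real.log (y / (1 - y)) = Real.log y - Real.log (1 - y) :=
      Real.log_div hy0.ne' (by linarith)
    have hc : c * (2 * y - 1) = Real.log y - Real.log (1 - y) := by
      rw [hcdef, div_mul_cancel₀ _ hd, hlog]
    have h := main_all x y c hx0 hx1 hy0 hy1 hc (fun h => absurd h hy2)
    have : (x - y) ^ 2 / (2 * y - 1) * Real.log (y / (1 - y)) = c * (x - y) ^ 2 := by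
      rw [hcdef]; ring
    linarith [this ▸ h]
  · intro hy2
    have hc : (2 : ℝ) * (2 * y - 1) = Real.log y - Real.log (1 - y) := by
      rw [hy2]; norm_num
    have h := main_all x y 2 hx0 hx1 hy0 hy1 hc (fun _ => rfl)
    linarith
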